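/- Let s, w, d be real numbers and let g = (1 − (s/2)·ε𝐢)·(w·1 − 𝐤)·(1 − (d/2)·ε𝐤) be the associated joint dual quaternion. Then g·conj(g) = (w² + 1)·1; in particular g has real norm, i.e. g lies in the Study quadric. -/

import Mathlib

open Quaternion TrivSqZeroExt DualNumber

noncomputable section

/-- The real dual quaternions. -/
abbrev DQR : Type := DualNumber (Quaternion ℝ)

/-- The quaternion unit 𝐢, viewed as a dual quaternion. -/
def qi : DQR := inl (⟨0,1,0,0⟩ : ℍ[ℝ])
/-- The quaternion unit 𝐤, viewed as a dual quaternion. -/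
def qk : DQR := inl (⟨0,0,0,1⟩ : ℍ[ℝ])

/-- A real scalar, viewed as a dual quaternion. -/
def rs (r : ℝ) : DQR := inl (algebraMap ℝ ℍ[ℝ] r)

/-- Quaternion conjugation of a dual quaternion, applied to both
the primal and dual part. -/
def dconj (q : DQR) : DQR := inl (star (fst q)) + inr (star (snd q))

set_option maxRecDepth 4000 in
set_option maxHeartbeats 1000000 in
/-- The joint dual quaternion `g = (1 - (s/2)ε𝐢)(w - 𝐤)(1 - (d/2)ε𝐤)` satisfies
`g * conj g = (w² + 1) · 1`; in particular it lies in the Study quadric. -/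
theorem joint_has_real_norm (s w d : ℝ) :
    ((1 - rs (s/2) * ε * qi) * (rs w - qk) * (1 - rs (d/2) * ε * qk)) *
        dconj ((1 - rs (s/2) * ε * qi) * (rs w - qk) * (1 - rs (d/2) * ε * qk)) =
      rs (w^2 + 1) := by
  unfold dconj rs qi qk
  obtain ⟨K, hK⟩ : ∃ K : ℍ[ℝ], (⟨0,0,0,1⟩ : ℍ[ℝ]) = K := ⟨_, rfl⟩
  rw [hK]
  obtain ⟨I, hI⟩ : ∃ I : ℍ[ℝ], (⟨0,1,0,0⟩ : ℍ[ℝ]) = I := ⟨_, rfl⟩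
  rw [hI]
  obtain ⟨hK1, hK2, hK3, hK4⟩ : K.re = 0 ∧ K.imI = 0 ∧ K.imJ = 0 ∧ K.imK = 1 := by
    subst hK; exact ⟨rfl, rfl, rfl, rfl⟩
  obtain ⟨hI1, hI2, hI3, hI4⟩ : I.re = 0 ∧ I.imI = 1 ∧ I.imJ = 0 ∧ I.imK = 0 := by
    subst hI; exact ⟨rfl, rfl, rfl, rfl⟩
  ext <;>
  · simp only [DualNumber.eps, fst_mul, TrivSqZeroExt.snd_mul, fst_add, snd_add, fst_sub,
      snd_sub, fst_one, snd_one, fst_inl, snd_inl, fst_inr, snd_inr, smul_zero, zero_add,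
      add_zero, smul_eq_mul, op_smul_eq_mul, mul_zero, zero_mul, mul_one, one_mul]
    simp [Quaternion.ext_iff, Quaternion.re_mul, Quaternion.imI_mul, Quaternion.imJ_mul,
      Quaternion.imK_mul, Quaternion.re_star, Quaternion.imI_star, Quaternion.imJ_star,
      Quaternion.imK_star, Quaternion.re_coe, Quaternion.imI_coe, Quaternion.imJ_coe,
      Quaternion.imK_coe, ← Quaternion.coe_pow, ← Quaternion.coe_div, hK1, hK2, hK3, hK4, hI1, hI2, hI3, hI4]
    try ring
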